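/- If S=(a_n)_{n∈ℤ} is a bi-infinite sequence with entries in {1,2,3} such that m(S) ≤ j₀ + 10⁻⁴, then S contains none of the words 322, 223, 323 as a subword; that is, there is no n ∈ ℤ with (a_n,a_{n+1},a_{n+2}) equal to (3,2,2), (2,2,3) or (3,2,3). -/

import Mathlib

open Filter Set

/-- Convergents of a continued fraction: `cfConv n a` is the value of the finite
continued fraction `[a 0; a 1, …, a n]`. -/
noncomputable def cfConv : ℕ → (ℕ → ℕ) → ℝ
  | 0, a => (a 0 : ℝ)
  | n + 1, a => (a 0 : ℝ) + 1 / cfConv n (fun i => a (i + 1))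

/-- The value `[a₀; a₁, a₂, …]` of an infinite continued fraction, as the limit
of its convergents (which exists since all entries are positive integers). -/
noncomputable def cfValue (a : ℕ → ℕ) : ℝ :=
  limUnder atTop (fun n => cfConv n a)

/-- `λ₀(S) = [a₀; a₁, a₂, …] + [0; a₋₁, a₋₂, …]` for a bi-infinite sequence `S`. -/
noncomputable def lambda0 (S : ℤ → ℕ) : ℝ :=
  cfValue (fun n : ℕ => S (n : ℤ)) + 1 / cfValue (fun n : ℕ => S (-(n : ℤ) - 1))

/-- `λ_k(S) = λ₀` applied to the sequence shifted by `k`. -/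
noncomputable def lambdaK (k : ℤ) (S : ℤ → ℕ) : ℝ :=
  lambda0 (fun n => S (n + k))

/-- The Markov value `m(S) = sup_{k ∈ ℤ} λ_k(S)`. -/
noncomputable def markovValue (S : ℤ → ℕ) : ℝ :=
  ⨆ k : ℤ, lambdaK k S

/-- The Lagrange value `ℓ(S) = limsup_{k → +∞} λ_k(S)`. -/
noncomputable def lagrangeValue (S : ℤ → ℕ) : ℝ :=
  Filter.limsup (fun k : ℤ => lambdaK k S) atTop

/-- The Markov spectrum: Markov values of bi-infinite sequences of positive
integers whose Markov value is finite. -/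
def MarkovSpectrum : Set ℝ :=
  {x | ∃ S : ℤ → ℕ, (∀ n, 0 < S n) ∧
    BddAbove (Set.range fun k : ℤ => lambdaK k S) ∧ markovValue S = x}

/-- The Lagrange spectrum: Lagrange values of bi-infinite sequences of positive
integers whose Lagrange value is finite. -/
def LagrangeSpectrum : Set ℝ :=
  {x | ∃ S : ℤ → ℕ, (∀ n, 0 < S n) ∧
    Filter.IsBoundedUnder (· ≤ ·) atTop (fun k : ℤ => lambdaK k S) ∧ lagrangeValue S = x}

/-- The periodic sequence `…212332111…` of period 9 with
`(a₋₄,…,a₄) = (2,1,2,3,3,2,1,1,1)`. -/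
def P1 : ℤ → ℕ := fun n =>
  match (n % 9).toNat with
  | 0 => 3 | 1 => 2 | 2 => 1 | 3 => 1 | 4 => 1 | 5 => 2 | 6 => 1 | 7 => 2 | _ => 3





def ValidSeq (a : ℕ → ℕ) : Prop := ∀ i, 1 ≤ a i ∧ a i ≤ 3

lemma validSeq_tail {a : ℕ → ℕ} (h : ValidSeq a) : ValidSeq (fun i => a (i + 1)) :=
  fun i => h (i + 1)

lemma cfConv_bounds : ∀ (n : ℕ) (a : ℕ → ℕ), ValidSeq a →
    1 ≤ cfConv n a ∧ cfConv n a ≤ 4 := by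
  intro n
  induction n with
  | zero =>
    intro a h
    have h0 := h 0
    simp only [cfConv]
    constructor
    · exact_mod_cast h0.1
    · have : (a 0 : ℝ) ≤ 3 := by exact_mod_cast h0.2
      linarith
  | succ n ih =>
    intro a h
    obtain ⟨h1, h4⟩ := ih _ (validSeq_tail h)
    have h0 := h 0
    have ha1 : (1:ℝ) ≤ (a 0 : ℝ) := by exact_mod_cast h0.1
    have ha3 : (a 0 : ℝ) ≤ 3 := by exact_mod_cast h0.2
    have hpos : (0:ℝ) < cfConv n (fun i => a (i + 1)) := by linarith
    simp only [cfConv]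
    constructor
    · have : (0:ℝ) ≤ 1 / cfConv n (fun i => a (i + 1)) := by positivity
      linarith
    · have : 1 / cfConv n (fun i => a (i + 1)) ≤ 1 := by
        rw [div_le_one hpos]; linarith
      linarith

lemma cfConv_succ_lb (n : ℕ) (a : ℕ → ℕ) (h : ValidSeq a) :
    (a 0 : ℝ) + 1/4 ≤ cfConv (n + 1) a := by
  obtain ⟨h1, h4⟩ := cfConv_bounds n _ (validSeq_tail h)
  have hpos : (0:ℝ) < cfConv n (fun i => a (i + 1)) := by linarith
  simp only [cfConv]
  have : (1:ℝ)/4 ≤ 1 / cfConv n (fun i => a (i + 1)) :=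
    one_div_le_one_div_of_le hpos h4
  linarith

lemma cfConv_diff : ∀ (n : ℕ) (a : ℕ → ℕ), ValidSeq a →
    |cfConv (n + 1) a - cfConv n a| ≤ (4/5 : ℝ) ^ n := by
  intro n
  induction n with
  | zero =>
    intro a h
    have h1 := (h 1).1
    have h1' : (1:ℝ) ≤ (a 1 : ℝ) := by exact_mod_cast h1
    simp only [cfConv]
    rw [show (a 0 : ℝ) + 1 / (a 1 : ℝ) - (a 0 : ℝ) = 1 / (a 1 : ℝ) by ring]
    rw [abs_of_pos (by positivity)]
    rw [pow_zero, div_le_one (by linarith)]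
    linarith
  | succ n ih =>
    intro a h
    have h' := validSeq_tail h
    set x := cfConv (n + 1) (fun i => a (i + 1)) with hx
    set y := cfConv n (fun i => a (i + 1)) with hy
    have hy1 : 1 ≤ y := (cfConv_bounds n _ h').1
    have hx54 : (5/4 : ℝ) ≤ x := by
      have := cfConv_succ_lb n _ h'
      have : (1:ℝ) ≤ ((fun i => a (i+1)) 0 : ℝ) := by exact_mod_cast (h 1).1
      have h2 := cfConv_succ_lb n (fun i => a (i+1)) h'
      linarith
    have hxpos : 0 < x := by linarith
    have hypos : 0 < y := by linarith
    have key : cfConv (n + 2) a - cfConv (n + 1) a = (y - x) / (x * y) := by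
      show ((a 0 : ℝ) + 1 / x) - ((a 0 : ℝ) + 1 / y) = (y - x) / (x * y)
      field_simp
      ring
    rw [key, abs_div, abs_of_pos (show (0:ℝ) < x*y by positivity), abs_sub_comm y x]
    have hih := ih _ h'
    calc |x - y| / (x * y) ≤ (4/5 : ℝ)^n / (5/4) := by
          apply div_le_div₀ (by positivity) hih (by norm_num)
          nlinarith
      _ = (4/5 : ℝ) ^ (n + 1) := by ring

lemma cfConv_tendsto {a : ℕ → ℕ} (h : ValidSeq a) :
    Tendsto (fun n => cfConv n a) atTop (nhds (cfValue a)) := by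
  have hc : CauchySeq (fun n => cfConv n a) := by
    apply cauchySeq_of_le_geometric (4/5 : ℝ) 1 (by norm_num)
    intro n
    rw [Real.dist_eq, abs_sub_comm, one_mul]
    exact cfConv_diff n a h
  obtain ⟨l, hl⟩ := cauchySeq_tendsto_of_complete hc
  have : cfValue a = l := hl.limUnder_eq
  rwa [this]

lemma cfValue_one_le {a : ℕ → ℕ} (h : ValidSeq a) : 1 ≤ cfValue a :=
  ge_of_tendsto (cfConv_tendsto h) (Eventually.of_forall fun n => (cfConv_bounds n a h).1)

lemma cfValue_le_four {a : ℕ → ℕ} (h : ValidSeq a) : cfValue a ≤ 4 :=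
  le_of_tendsto (cfConv_tendsto h) (Eventually.of_forall fun n => (cfConv_bounds n a h).2)

lemma cfValue_pos {a : ℕ → ℕ} (h : ValidSeq a) : 0 < cfValue a :=
  lt_of_lt_of_le one_pos (cfValue_one_le h)

lemma cfValue_eq {a : ℕ → ℕ} (h : ValidSeq a) :
    cfValue a = (a 0 : ℝ) + 1 / cfValue (fun i => a (i + 1)) := by
  have h' := validSeq_tail h
  have t1 := cfConv_tendsto h
  have t2 := cfConv_tendsto h'
  have hne : cfValue (fun i => a (i + 1)) ≠ 0 := ne_of_gt (cfValue_pos h')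
  have t3 : Tendsto (fun n => cfConv (n + 1) a) atTop (nhds (cfValue a)) :=
    t1.comp (tendsto_add_atTop_nat 1)
  have t4 : Tendsto (fun n => (a 0 : ℝ) + 1 / cfConv n (fun i => a (i + 1))) atTop
      (nhds ((a 0 : ℝ) + 1 / cfValue (fun i => a (i + 1)))) :=
    tendsto_const_nhds.add (tendsto_const_nhds.div t2 hne)
  exact tendsto_nhds_unique t3 t4

lemma cv_lb1 {a : ℕ → ℕ} (h : ValidSeq a) : (a 0 : ℝ) + 1/4 ≤ cfValue a := by
  rw [cfValue_eq h]
  have h4 := cfValue_le_four (validSeq_tail h)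
  have hp := cfValue_pos (validSeq_tail h)
  have := one_div_le_one_div_of_le hp h4
  linarith

lemma cv_ub1 {a : ℕ → ℕ} (h : ValidSeq a) : cfValue a ≤ (a 0 : ℝ) + 4/5 := by
  rw [cfValue_eq h]
  have h' := validSeq_tail h
  have hlb := cv_lb1 h'
  have h1 : (1:ℝ) ≤ ((a 1 : ℕ) : ℝ) := by exact_mod_cast (h 1).1
  have h54 : (5/4 : ℝ) ≤ cfValue (fun i => a (i + 1)) := by
    linarith
  have := one_div_le_one_div_of_le (by norm_num : (0:ℝ) < 5/4) h54
  linarith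

lemma cv_lb2 {a : ℕ → ℕ} (h : ValidSeq a) :
    (a 0 : ℝ) + 1 / ((a 1 : ℝ) + 4/5) ≤ cfValue a := by
  rw [cfValue_eq h]
  have h' := validSeq_tail h
  have hub : cfValue (fun i => a (i + 1)) ≤ (a 1 : ℝ) + 4/5 := cv_ub1 h'
  have hp := cfValue_pos h'
  have := one_div_le_one_div_of_le hp hub
  linarith

lemma cv_ub2 {a : ℕ → ℕ} (h : ValidSeq a) :
    cfValue a ≤ (a 0 : ℝ) + 1 / ((a 1 : ℝ) + 1/4) := by
  rw [cfValue_eq h]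
  have h' := validSeq_tail h
  have hlb : (a 1 : ℝ) + 1/4 ≤ cfValue (fun i => a (i + 1)) := cv_lb1 h'
  have h1 : (1:ℝ) ≤ (a 1 : ℝ) := by exact_mod_cast (h 1).1
  have := one_div_le_one_div_of_le (by linarith : (0:ℝ) < (a 1 : ℝ) + 1/4) hlb
  linarith

lemma cv_lb3 {a : ℕ → ℕ} (h : ValidSeq a) :
    (a 0 : ℝ) + 1 / ((a 1 : ℝ) + 1 / ((a 2 : ℝ) + 1/4)) ≤ cfValue a := by
  rw [cfValue_eq h]
  have h' := validSeq_tail h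
  have hub : cfValue (fun i => a (i + 1)) ≤ (a 1 : ℝ) + 1 / ((a 2 : ℝ) + 1/4) := cv_ub2 h'
  have hp := cfValue_pos h'
  have := one_div_le_one_div_of_le hp hub
  linarith

lemma cv_ub3 {a : ℕ → ℕ} (h : ValidSeq a) :
    cfValue a ≤ (a 0 : ℝ) + 1 / ((a 1 : ℝ) + 1 / ((a 2 : ℝ) + 4/5)) := by
  rw [cfValue_eq h]
  have h' := validSeq_tail h
  have hlb : (a 1 : ℝ) + 1 / ((a 2 : ℝ) + 4/5) ≤ cfValue (fun i => a (i + 1)) := cv_lb2 h'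
  have h1 : (1:ℝ) ≤ (a 1 : ℝ) := by exact_mod_cast (h 1).1
  have h2 : (1:ℝ) ≤ (a 2 : ℝ) := by exact_mod_cast (h 2).1
  have hpos : (0:ℝ) < (a 1 : ℝ) + 1 / ((a 2 : ℝ) + 4/5) := by positivity
  have := one_div_le_one_div_of_le hpos hlb
  linarith





lemma P1_bounds (z : ℤ) : 1 ≤ P1 z ∧ P1 z ≤ 3 := by
  unfold P1
  constructor <;> (split <;> omega)

lemma P1_fwd_valid : ValidSeq (fun n : ℕ => P1 (n : ℤ)) := fun i => P1_bounds _
lemma P1_bwd_valid : ValidSeq (fun n : ℕ => P1 (-(n : ℤ) - 1)) := fun i => P1_bounds _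

lemma j0_aux (A B : ℝ) (hA : A ≤ 78/23) (hB : (47:ℝ)/14 ≤ B) :
    A + 1 / B + 1 / 10 ^ 4 < 369/100 := by
  have hBpos : (0:ℝ) < B := by linarith
  have h1 : 1 / B ≤ 14/47 := by rw [div_le_iff₀ hBpos]; linarith
  have : (1:ℝ) / 10 ^ 4 = 1/10000 := by norm_num
  rw [this]
  linarith

lemma j0_bound : lambda0 P1 + 1 / 10 ^ 4 < 369/100 := by
  have e0 : P1 0 = 3 := by decide
  have e1 : P1 1 = 2 := by decide
  have e2 : P1 2 = 1 := by decide
  have f0 : P1 (-1) = 3 := by decide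
  have f1 : P1 (-2) = 2 := by decide
  have f2 : P1 (-3) = 1 := by decide
  have hA : cfValue (fun n : ℕ => P1 (n : ℤ)) ≤ 78/23 := by
    have h := cv_ub3 P1_fwd_valid
    simp only [e0, e1, e2, Nat.cast_ofNat, Nat.cast_zero, Nat.cast_one, Int.cast_zero] at h
    norm_num at h
    linarith
  have hB : (47:ℝ)/14 ≤ cfValue (fun n : ℕ => P1 (-(n : ℤ) - 1)) := by
    have h := cv_lb3 P1_bwd_valid
    norm_num [f0, f1, f2] at h
    linarith
  unfold lambda0
  exact j0_aux _ _ hA hB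

lemma digit_bounds {S : ℤ → ℕ} (hS : ∀ n : ℤ, S n ∈ ({1, 2, 3} : Set ℕ)) (z : ℤ) :
    1 ≤ S z ∧ S z ≤ 3 := by
  have := hS z
  simp only [Set.mem_insert_iff, Set.mem_singleton_iff] at this
  omega

lemma fwd_valid {S : ℤ → ℕ} (hS : ∀ n : ℤ, S n ∈ ({1, 2, 3} : Set ℕ)) (k : ℤ) :
    ValidSeq (fun m : ℕ => S ((m : ℤ) + k)) := fun _ => digit_bounds hS _

lemma bwd_valid {S : ℤ → ℕ} (hS : ∀ n : ℤ, S n ∈ ({1, 2, 3} : Set ℕ)) (k : ℤ) :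
    ValidSeq (fun m : ℕ => S (-(m : ℤ) - 1 + k)) := fun _ => digit_bounds hS _

lemma lambdaK_eq (S : ℤ → ℕ) (k : ℤ) :
    lambdaK k S = cfValue (fun m : ℕ => S ((m : ℤ) + k))
      + 1 / cfValue (fun m : ℕ => S (-(m : ℤ) - 1 + k)) := rfl

lemma lambdaK_le_aux (X Y c : ℝ) (hX : X ≤ c + 4/5) (hd : c ≤ 3) (hY : 1 ≤ Y) :
    X + 1/Y ≤ 24/5 := by
  have h1 : 1/Y ≤ 1 := by rw [div_le_one (by linarith)]; exact hY
  linarith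

lemma lambdaK_le {S : ℤ → ℕ} (hS : ∀ n : ℤ, S n ∈ ({1, 2, 3} : Set ℕ)) (k : ℤ) :
    lambdaK k S ≤ 24/5 := by
  have hX : cfValue (fun m : ℕ => S ((m : ℤ) + k)) ≤ (S ((0:ℕ) + k) : ℝ) + 4/5 :=
    cv_ub1 (fwd_valid hS k)
  have hd : (S ((0:ℕ) + k) : ℝ) ≤ 3 := by exact_mod_cast (digit_bounds hS _).2
  have hY : 1 ≤ cfValue (fun m : ℕ => S (-(m : ℤ) - 1 + k)) := cfValue_one_le (bwd_valid hS k)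
  rw [lambdaK_eq]
  exact lambdaK_le_aux _ _ _ hX hd hY

lemma contra_main {X Y p q : ℝ} (hX : p ≤ X) (hY : Y ≤ q) (hY1 : 1 ≤ Y)
    (hpq : 369/100 ≤ p + 1/q) (hlt : X + 1/Y < 369/100) : False := by
  have hq : (0:ℝ) < q := by linarith
  have := one_div_le_one_div_of_le (by linarith : (0:ℝ) < Y) hY
  linarith

lemma digit_eq {S : ℤ → ℕ} {w : ℤ} {d : ℕ} (h : S w = d) {z : ℤ} (hz : z = w) : S z = d := by
  rw [hz, h]

lemma digit_trichotomy {S : ℤ → ℕ} (hS : ∀ n : ℤ, S n ∈ ({1, 2, 3} : Set ℕ)) (z : ℤ) :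
    S z = 1 ∨ S z = 2 ∨ S z = 3 := by
  have := hS z
  simpa using this

lemma cv_ub1' {a : ℕ → ℕ} (h : ValidSeq a) {d0 : ℕ} (h0 : a 0 = d0) :
    cfValue a ≤ (d0 : ℝ) + 4/5 := by
  have := cv_ub1 h; rw [h0] at this; exact this

lemma cv_ub2' {a : ℕ → ℕ} (h : ValidSeq a) {d0 d1 : ℕ} (h0 : a 0 = d0) (h1 : a 1 = d1) :
    cfValue a ≤ (d0 : ℝ) + 1 / ((d1 : ℝ) + 1/4) := by
  have := cv_ub2 h; rw [h0, h1] at this; exact this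

lemma cv_lb2' {a : ℕ → ℕ} (h : ValidSeq a) {d0 d1 : ℕ} (h0 : a 0 = d0) (h1 : a 1 = d1) :
    (d0 : ℝ) + 1 / ((d1 : ℝ) + 4/5) ≤ cfValue a := by
  have := cv_lb2 h; rw [h0, h1] at this; exact this

lemma cv_lb3' {a : ℕ → ℕ} (h : ValidSeq a) {d0 d1 d2 : ℕ}
    (h0 : a 0 = d0) (h1 : a 1 = d1) (h2 : a 2 = d2) :
    (d0 : ℝ) + 1 / ((d1 : ℝ) + 1 / ((d2 : ℝ) + 1/4)) ≤ cfValue a := by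
  have := cv_lb3 h; rw [h0, h1, h2] at this; exact this

/-- If `m(S) ≤ j₀ + 10⁻⁴` then `S` contains none of the words `322`, `223`, `323`. -/
theorem forbidden_words_322_223_323 (S : ℤ → ℕ)
    (hS : ∀ n : ℤ, S n ∈ ({1, 2, 3} : Set ℕ))
    (hm : markovValue S ≤ lambda0 P1 + 1 / 10 ^ 4) :
    ∀ n : ℤ,
      ¬(S n = 3 ∧ S (n + 1) = 2 ∧ S (n + 2) = 2) ∧
      ¬(S n = 2 ∧ S (n + 1) = 2 ∧ S (n + 2) = 3) ∧
      ¬(S n = 3 ∧ S (n + 1) = 2 ∧ S (n + 2) = 3) := by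
  have bdd : BddAbove (Set.range fun k : ℤ => lambdaK k S) :=
    ⟨24/5, by rintro x ⟨k, rfl⟩; exact lambdaK_le hS k⟩
  have key : ∀ k : ℤ, cfValue (fun m : ℕ => S ((m : ℤ) + k))
      + 1 / cfValue (fun m : ℕ => S (-(m : ℤ) - 1 + k)) < 369/100 := by
    intro k
    have h1 : lambdaK k S ≤ markovValue S := le_ciSup bdd k
    rw [lambdaK_eq] at h1
    exact lt_of_le_of_lt (h1.trans hm) j0_bound
  intro n
  refine ⟨?_, ?_, ?_⟩ <;> rintro ⟨h1, h2, h3⟩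
  · -- word 322
    have hY1 := cfValue_one_le (bwd_valid hS n)
    have hX := cv_lb3' (fwd_valid hS n) (digit_eq h1 (by push_cast; ring))
      (digit_eq h2 (by push_cast; ring)) (digit_eq h3 (by push_cast; ring))
    rcases digit_trichotomy hS (n-1) with hv1 | hv1 | hv1
    · exact contra_main hX (cv_ub1' (bwd_valid hS n) (digit_eq hv1 (by push_cast; ring)))
        hY1 (by norm_num) (key n)
    · exact contra_main hX (cv_ub1' (bwd_valid hS n) (digit_eq hv1 (by push_cast; ring)))
        hY1 (by norm_num) (key n)
    · rcases digit_trichotomy hS (n-2) with hv2 | hv2 | hv2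
      · exact contra_main
          (cv_lb3' (fwd_valid hS (n-1)) (digit_eq hv1 (by push_cast; ring))
            (digit_eq h1 (by push_cast; ring)) (digit_eq h2 (by push_cast; ring)))
          (cv_ub1' (bwd_valid hS (n-1)) (digit_eq hv2 (by push_cast; ring)))
          (cfValue_one_le (bwd_valid hS (n-1))) (by norm_num) (key (n-1))
      · exact contra_main hX
          (cv_ub2' (bwd_valid hS n) (digit_eq hv1 (by push_cast; ring))
            (digit_eq hv2 (by push_cast; ring)))
          hY1 (by norm_num) (key n)
      · exact contra_main hX
          (cv_ub2' (bwd_valid hS n) (digit_eq hv1 (by push_cast; ring))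
            (digit_eq hv2 (by push_cast; ring)))
          hY1 (by norm_num) (key n)
  · -- word 223
    have hY1 := cfValue_one_le (bwd_valid hS (n+2))
    have hY := cv_ub2' (bwd_valid hS (n+2)) (digit_eq h2 (by push_cast; ring))
      (digit_eq h1 (by push_cast; ring))
    rcases digit_trichotomy hS (n+3) with hu1 | hu1 | hu1
    · exact contra_main
        (cv_lb2' (fwd_valid hS (n+2)) (digit_eq h3 (by push_cast; ring))
          (digit_eq hu1 (by push_cast; ring)))
        hY hY1 (by norm_num) (key (n+2))
    · exact contra_main
        (cv_lb2' (fwd_valid hS (n+2)) (digit_eq h3 (by push_cast; ring))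
          (digit_eq hu1 (by push_cast; ring)))
        hY hY1 (by norm_num) (key (n+2))
    · rcases digit_trichotomy hS (n+4) with hu2 | hu2 | hu2
      · exact contra_main
          (cv_lb2' (fwd_valid hS (n+3)) (digit_eq hu1 (by push_cast; ring))
            (digit_eq hu2 (by push_cast; ring)))
          (cv_ub1' (bwd_valid hS (n+3)) (digit_eq h3 (by push_cast; ring)))
          (cfValue_one_le (bwd_valid hS (n+3))) (by norm_num) (key (n+3))
      · exact contra_main
          (cv_lb3' (fwd_valid hS (n+2)) (digit_eq h3 (by push_cast; ring))
            (digit_eq hu1 (by push_cast; ring)) (digit_eq hu2 (by push_cast; ring)))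
          hY hY1 (by norm_num) (key (n+2))
      · exact contra_main
          (cv_lb3' (fwd_valid hS (n+2)) (digit_eq h3 (by push_cast; ring))
            (digit_eq hu1 (by push_cast; ring)) (digit_eq hu2 (by push_cast; ring)))
          hY hY1 (by norm_num) (key (n+2))
  · -- word 323
    have hY1 := cfValue_one_le (bwd_valid hS n)
    have hX := cv_lb3' (fwd_valid hS n) (digit_eq h1 (by push_cast; ring))
      (digit_eq h2 (by push_cast; ring)) (digit_eq h3 (by push_cast; ring))
    rcases digit_trichotomy hS (n-1) with hv1 | hv1 | hv1
    · exact contra_main hX (cv_ub1' (bwd_valid hS n) (digit_eq hv1 (by push_cast; ring)))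
        hY1 (by norm_num) (key n)
    · exact contra_main hX (cv_ub1' (bwd_valid hS n) (digit_eq hv1 (by push_cast; ring)))
        hY1 (by norm_num) (key n)
    · rcases digit_trichotomy hS (n-2) with hv2 | hv2 | hv2
      · exact contra_main
          (cv_lb3' (fwd_valid hS (n-1)) (digit_eq hv1 (by push_cast; ring))
            (digit_eq h1 (by push_cast; ring)) (digit_eq h2 (by push_cast; ring)))
          (cv_ub1' (bwd_valid hS (n-1)) (digit_eq hv2 (by push_cast; ring)))
          (cfValue_one_le (bwd_valid hS (n-1))) (by norm_num) (key (n-1))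
      · exact contra_main hX
          (cv_ub2' (bwd_valid hS n) (digit_eq hv1 (by push_cast; ring))
            (digit_eq hv2 (by push_cast; ring)))
          hY1 (by norm_num) (key n)
      · exact contra_main hX
          (cv_ub2' (bwd_valid hS n) (digit_eq hv1 (by push_cast; ring))
            (digit_eq hv2 (by push_cast; ring)))
          hY1 (by norm_num) (key n)
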